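/- arXiv:2109.03678 — 5 statements merged into one kernel-verified Lean document; each statement's English description precedes it below -/
import Mathlib

section
/- Let A be a nonnegative m×n matrix, σ, τ > 0, and ε ∈ (0, 4 min{σ,τ}]. Set δ = ε/2, η = δ/(4 min{σ,τ}), W⁺ = max{σ,τ}, Λ^{(1)} = 1_m, and for k = 1, …, K with K a natural number satisfying K ≥ 32στ log(m)/ε², let p^{(k)} ∈ ℝ_{≥0}^n be points such that the losses ℓ^{(k)} = 1_m − A p^{(k)} lie in [−σ, τ]^m and such that ⟨A^T(Λ^{(k)}/‖Λ^{(k)}‖₁), p^{(k)}⟩ ≤ 1 (the oracle condition), where Λ^{(k+1)} = Λ^{(k)} ⊙ (1_m − (η/W⁺) ℓ^{(k)}). Then the average p̄ = (1/K) Σ_{k=1}^{K} p^{(k)} satisfies ⟨A_i, p̄⟩ ≤ 1 + ε for every row A_i of A, i.e., max_{i∈[m]} ⟨A_i, p̄⟩ ≤ 1 + ε. -/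
open scoped BigOperators
open Finset

/-- Key pointwise inequality for the MWU analysis. -/
lemma pst_key_ineq {a b x : ℝ} (ha0 : 0 < a) (hb0 : 0 < b) (hb2 : b ≤ 1/2)
    (hxa : -a ≤ x) (hxb : x ≤ b) :
    -x ≤ (1 + a) * Real.log (1 - x) + max x 0 * ((a + b) / (1 - b)) := by
  have hb1 : (0:ℝ) < 1 - b := by linarith
  have h1x : (0:ℝ) < 1 - x := by linarith
  have hlog : 1 - (1 - x)⁻¹ ≤ Real.log (1 - x) := Real.one_sub_inv_le_log_of_pos h1x
  have ht : -x ≤ (1 - x) * Real.log (1 - x) := by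
    have h := mul_le_mul_of_nonneg_left hlog h1x.le
    have h2 : (1 - x) * (1 - (1 - x)⁻¹) = -x := by field_simp; ring
    linarith [h2 ▸ h]
  rcases le_or_gt x 0 with hx | hx
  · rw [max_eq_right hx, zero_mul, add_zero]
    have hL : 0 ≤ Real.log (1 - x) := Real.log_nonneg (by linarith)
    nlinarith [mul_nonneg (by linarith : (0:ℝ) ≤ a + x) hL]
  · rw [max_eq_left hx.le]
    set c : ℝ := (a + b) / (1 - b) with hcdef
    have hc : c * (1 - b) = a + b := by rw [hcdef]; field_simp
    set L : ℝ := Real.log (1 - x) with hLdef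
    have h1 : (1 + a) * (-x) ≤ (1 + a) * ((1 - x) * L) :=
      mul_le_mul_of_nonneg_left ht (by linarith)
    have hxc : x * c * (1 - x) * (1 - b) = x * (a + b) * (1 - x) := by
      rw [show x * c * (1 - x) * (1 - b) = x * (1 - x) * (c * (1 - b)) by ring, hc]; ring
    have final2 : (-x) * (1 - x) * (1 - b) ≤ ((1 + a) * L + x * c) * (1 - x) * (1 - b) := by
      nlinarith [mul_le_mul_of_nonneg_right h1 hb1.le,
        mul_nonneg (mul_nonneg hx.le (by linarith : (0:ℝ) ≤ b - x)) (by linarith : (0:ℝ) ≤ 1 + a)]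
    have final1 := le_of_mul_le_mul_right final2 hb1
    exact le_of_mul_le_mul_right final1 h1x

/-- PST guarantee: if an oracle produces points `p^{(k)}` whose losses
`1 - A p^{(k)}` lie in `[-σ, τ]` and which satisfy the query constraints given
by the multiplicative weights, then after `K ≥ 32στ log(m)/ε²` rounds the
average point `p̄` satisfies `⟨Aᵢ, p̄⟩ ≤ 1 + ε` for every row. -/
theorem pst_guarantee {m n : ℕ}
    (A : Matrix (Fin m) (Fin n) ℝ) (hA : ∀ i j, 0 ≤ A i j)
    (σ τ ε : ℝ) (hσ : 0 < σ) (hτ : 0 < τ)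
    (hε0 : 0 < ε) (hε : ε ≤ 4 * min σ τ)
    (δ η : ℝ) (hδ : δ = ε / 2) (hη : η = δ / (4 * min σ τ))
    (K : ℕ) (hK : 32 * σ * τ * Real.log m / ε ^ 2 ≤ K)
    (p : ℕ → Fin n → ℝ) (hp : ∀ k < K, ∀ j, 0 ≤ p k j)
    (Λ : ℕ → Fin m → ℝ) (hΛ0 : Λ 0 = fun _ => 1)
    (hΛ : ∀ k, Λ (k + 1) = fun i => Λ k i * (1 - (η / max σ τ) * (1 - A.mulVec (p k) i)))
    (hwidth : ∀ k < K, ∀ i, (1 - A.mulVec (p k) i) ∈ Set.Icc (-σ) τ)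
    (horacle : ∀ k < K,
      ∑ j, A.transpose.mulVec (fun i => Λ k i / ∑ i', |Λ k i'|) j * p k j ≤ 1) :
    ∀ i, ∑ j, A i j * ((1 / K) * ∑ k ∈ Finset.range K, p k j) ≤ 1 + ε := by
  intro i
  rcases Nat.eq_zero_or_pos m with hm0 | hm
  · exact absurd i.isLt (by omega)
  rcases Nat.eq_zero_or_pos K with hK0 | hKpos
  · subst hK0; simp only [Finset.range_zero, Finset.sum_empty, mul_zero, Finset.sum_const_zero]
    linarith
  haveI : Nonempty (Fin m) := ⟨⟨0, hm⟩⟩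
  -- basic constants
  have hmin : (0:ℝ) < min σ τ := lt_min hσ hτ
  have hmax : (0:ℝ) < max σ τ := lt_max_of_lt_left hσ
  set E : ℝ := η / max σ τ with hEdef
  have hmm : min σ τ * max σ τ = σ * τ := min_mul_max σ τ
  have hE : E = ε / (8 * (σ * τ)) := by
    rw [hEdef, hη, hδ, div_div, div_div, ← hmm]
    ring_nf
  have hE0 : (0:ℝ) < E := by rw [hE]; positivity
  have hE8 : E * (8 * (σ * τ)) = ε := by
    rw [hE]; field_simp
  set a : ℝ := E * σ with hadef
  set b : ℝ := E * τ with hbdef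
  have ha0 : 0 < a := mul_pos hE0 hσ
  have hb0 : 0 < b := mul_pos hE0 hτ
  have ha2 : a ≤ 1/2 := by
    nlinarith [min_le_right σ τ, hE8, hτ]
  have hb2 : b ≤ 1/2 := by
    nlinarith [min_le_left σ τ, hE8, hσ]
  have hΛ' : ∀ k i', Λ (k + 1) i' = Λ k i' * (1 - E * (1 - A.mulVec (p k) i')) :=
    fun k i' => by rw [hΛ k]
  -- positivity of weights
  have hpos : ∀ k, k ≤ K → ∀ i', 0 < Λ k i' := by
    intro k
    induction k with
    | zero => intro _ i'; rw [hΛ0]; norm_num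
    | succ k ih =>
      intro hk i'
      have hkK : k < K := Nat.lt_of_succ_le hk
      have hw := hwidth k hkK i'
      have hub : E * (1 - A.mulVec (p k) i') ≤ E * τ :=
        mul_le_mul_of_nonneg_left hw.2 hE0.le
      have hfac : 0 < 1 - E * (1 - A.mulVec (p k) i') := by
        rw [← hbdef] at hub; linarith
      rw [hΛ' k i']
      exact mul_pos (ih hkK.le i') hfac
  -- potential is non-increasing
  have hsum : ∀ k, k ≤ K → (∑ i', Λ k i') ≤ (m:ℝ) := by
    intro k
    induction k with
    | zero => intro _; rw [hΛ0]; simp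
    | succ k ih =>
      intro hk
      have hkK : k < K := Nat.lt_of_succ_le hk
      have hΦpos : 0 < ∑ i', Λ k i' :=
        Finset.sum_pos (fun i' _ => hpos k hkK.le i') Finset.univ_nonempty
      have habs : (∑ i', |Λ k i'|) = ∑ i', Λ k i' :=
        Finset.sum_congr rfl fun i' _ => abs_of_pos (hpos k hkK.le i')
      have hor := horacle k hkK
      have key : (∑ j, A.transpose.mulVec (fun i' => Λ k i' / ∑ i'', |Λ k i''|) j * p k j)
          = (∑ i', Λ k i' * A.mulVec (p k) i') / (∑ i', Λ k i') := by
        simp only [Matrix.mulVec, Matrix.transpose_apply, dotProduct, habs]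
        simp only [Finset.sum_mul, Finset.mul_sum, Finset.sum_div]
        rw [Finset.sum_comm]
        refine Finset.sum_congr rfl fun i' _ => Finset.sum_congr rfl fun j _ => by ring
      rw [key] at hor
      have h3 : ∑ i', Λ k i' * A.mulVec (p k) i' ≤ ∑ i', Λ k i' :=
        (div_le_one hΦpos).mp hor
      have h4 : ∑ i', Λ (k+1) i'
          = (∑ i', Λ k i') - E * ((∑ i', Λ k i') - ∑ i', Λ k i' * A.mulVec (p k) i') := by
        have expand : ∀ i', Λ (k+1) i'
            = Λ k i' - (E * Λ k i' - E * (Λ k i' * A.mulVec (p k) i')) := fun i' => by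
          rw [hΛ' k i']; ring
        simp only [expand]
        rw [Finset.sum_sub_distrib, Finset.sum_sub_distrib, ← Finset.mul_sum, ← Finset.mul_sum]
        ring
      rw [h4]
      have : 0 ≤ E * ((∑ i', Λ k i') - ∑ i', Λ k i' * A.mulVec (p k) i') :=
        mul_nonneg hE0.le (by linarith)
      linarith [ih hkK.le]
  -- product formula
  have hprod : ∀ k, Λ k i = ∏ j ∈ Finset.range k, (1 - E * (1 - A.mulVec (p j) i)) := by
    intro k
    induction k with
    | zero => rw [hΛ0]; simp
    | succ k ih => rw [hΛ' k i, ih, Finset.prod_range_succ]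
  -- bounds on each x k
  set X : ℕ → ℝ := fun k => E * (1 - A.mulVec (p k) i) with hXdef
  have hXa : ∀ k < K, -a ≤ X k := by
    intro k hk
    have hw := hwidth k hk i
    have := mul_le_mul_of_nonneg_left hw.1 hE0.le
    simp only [hXdef]; nlinarith
  have hXb : ∀ k < K, X k ≤ b := by
    intro k hk
    have hw := hwidth k hk i
    have := mul_le_mul_of_nonneg_left hw.2 hE0.le
    simpa [hXdef, hbdef] using this
  have hfacpos : ∀ k ∈ Finset.range K, (0:ℝ) < 1 - X k := by
    intro k hk
    have := hXb k (Finset.mem_range.mp hk)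
    linarith
  -- log-sum bound
  have hΛK : Λ K i ≤ (m:ℝ) :=
    le_trans (Finset.single_le_sum (fun i' _ => (hpos K le_rfl i').le) (Finset.mem_univ i))
      (hsum K le_rfl)
  have hΛKpos : 0 < Λ K i := hpos K le_rfl i
  have hlogsum : ∑ k ∈ Finset.range K, Real.log (1 - X k) ≤ Real.log m := by
    rw [← Real.log_prod (fun k hk => (hfacpos k hk).ne')]
    have : (∏ k ∈ Finset.range K, (1 - X k)) = Λ K i := (hprod K).symm
    rw [this]
    exact Real.log_le_log hΛKpos hΛK
  have hlog0 : 0 ≤ Real.log m := Real.log_nonneg (by exact_mod_cast hm)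
  -- sum of pointwise inequalities
  have hsum1 : ∑ k ∈ Finset.range K, (-(X k))
      ≤ (1 + a) * Real.log m + (∑ k ∈ Finset.range K, max (X k) 0) * ((a + b) / (1 - b)) := by
    have step : ∑ k ∈ Finset.range K, (-(X k))
        ≤ ∑ k ∈ Finset.range K, ((1 + a) * Real.log (1 - X k) + max (X k) 0 * ((a + b) / (1 - b))) :=
      Finset.sum_le_sum fun k hk =>
        pst_key_ineq ha0 hb0 hb2 (hXa k (Finset.mem_range.mp hk)) (hXb k (Finset.mem_range.mp hk))
    rw [Finset.sum_add_distrib, ← Finset.mul_sum, ← Finset.sum_mul] at step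
    have h5 : (1 + a) * (∑ k ∈ Finset.range K, Real.log (1 - X k)) ≤ (1 + a) * Real.log m :=
      mul_le_mul_of_nonneg_left hlogsum (by linarith)
    linarith
  set P' : ℝ := ∑ k ∈ Finset.range K, max (X k) 0 with hP'def
  set N' : ℝ := ∑ k ∈ Finset.range K, max (-(X k)) 0 with hN'def
  have hNP : ∑ k ∈ Finset.range K, (-(X k)) = N' - P' := by
    rw [hN'def, hP'def, ← Finset.sum_sub_distrib]
    refine Finset.sum_congr rfl fun k _ => ?_
    rcases le_total (X k) 0 with h | h
    · rw [max_eq_right h, max_eq_left (by linarith)]; ring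
    · rw [max_eq_left h, max_eq_right (by linarith)]; ring
  have hP0 : 0 ≤ P' := Finset.sum_nonneg fun k _ => le_max_right _ _
  have hN0 : 0 ≤ N' := Finset.sum_nonneg fun k _ => le_max_right _ _
  have hN : N' ≤ (K:ℝ) * a := by
    calc N' ≤ ∑ _k ∈ Finset.range K, a :=
          Finset.sum_le_sum fun k hk =>
            max_le (by linarith [hXa k (Finset.mem_range.mp hk)]) ha0.le
      _ = (K:ℝ) * a := by rw [Finset.sum_const, Finset.card_range, nsmul_eq_mul]
  have hPb : P' ≤ (K:ℝ) * b := by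
    calc P' ≤ ∑ _k ∈ Finset.range K, b :=
          Finset.sum_le_sum fun k hk =>
            max_le (hXb k (Finset.mem_range.mp hk)) hb0.le
      _ = (K:ℝ) * b := by rw [Finset.sum_const, Finset.card_range, nsmul_eq_mul]
  -- conclusion: sum of mulVec bounded
  have hexp : ∑ k ∈ Finset.range K, (-(X k))
      = E * ((∑ k ∈ Finset.range K, A.mulVec (p k) i) - K) := by
    have e1 : ∀ k, -(X k) = E * (A.mulVec (p k) i) - E := fun k => by
      simp only [hXdef]; ring
    simp only [e1]
    rw [Finset.sum_sub_distrib, ← Finset.mul_sum, Finset.sum_const, Finset.card_range,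
      nsmul_eq_mul]
    ring
  have hS : (∑ k ∈ Finset.range K, A.mulVec (p k) i) ≤ (K:ℝ) * (1 + ε) := by
    rcases le_or_gt (∑ k ∈ Finset.range K, (-(X k))) 0 with hcase | hcase
    · rw [hexp] at hcase
      have h6 : (∑ k ∈ Finset.range K, A.mulVec (p k) i) - K ≤ 0 := by
        rw [show (0:ℝ) = E * 0 by ring] at hcase
        exact le_of_mul_le_mul_left hcase hE0
      have hKε : (0:ℝ) ≤ (K:ℝ) * ε := mul_nonneg (Nat.cast_nonneg K) hε0.le
      linarith
    · -- nontrivial case: N' > P'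
      have hPN : P' ≤ N' := by rw [hNP] at hcase; linarith
      have hPa : P' ≤ (K:ℝ) * a := le_trans hPN hN
      have hb1 : (0:ℝ) < 1 - b := by linarith
      have hc2 : (a + b) / (1 - b) ≤ 2 * (a + b) := by
        rw [div_le_iff₀ hb1]
        linarith [mul_nonneg (by linarith : (0:ℝ) ≤ a + b) (by linarith : (0:ℝ) ≤ 1 - 2*b)]
      have t1 : P' * ((a + b) / (1 - b)) ≤ P' * (2 * (a + b)) :=
        mul_le_mul_of_nonneg_left hc2 hP0
      have t3 : a * P' ≤ a * ((K:ℝ) * b) := mul_le_mul_of_nonneg_left hPb ha0.le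
      have t4 : b * P' ≤ b * ((K:ℝ) * a) := mul_le_mul_of_nonneg_left hPa hb0.le
      have h32 : 32 * σ * τ * Real.log m ≤ (K:ℝ) * ε ^ 2 := by
        rw [div_le_iff₀ (by positivity)] at hK
        linarith
      have hε2 : ε ^ 2 = 64 * (σ * τ) * (a * b) := by
        rw [hadef, hbdef, ← hE8]; ring
      have hlogm2 : Real.log m ≤ 2 * (K:ℝ) * (a * b) := by
        have h' : 32 * (σ * τ) * Real.log m ≤ 32 * (σ * τ) * (2 * (K:ℝ) * (a * b)) := by
          calc 32 * (σ * τ) * Real.log m = 32 * σ * τ * Real.log m := by ring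
            _ ≤ (K:ℝ) * ε ^ 2 := h32
            _ = 32 * (σ * τ) * (2 * (K:ℝ) * (a * b)) := by rw [hε2]; ring
        exact le_of_mul_le_mul_left h' (by positivity)
      have t5 : (1 + a) * Real.log m ≤ 3 * ((K:ℝ) * (a * b)) := by
        linarith [mul_nonneg (by linarith : (0:ℝ) ≤ 1/2 - a) hlog0, hlogm2, hlog0]
      have hKEε : (K:ℝ) * (E * ε) = 8 * ((K:ℝ) * (a * b)) := by
        rw [hadef, hbdef, ← hE8]; ring
      have t2 : P' * (2 * (a + b)) = 2 * (a * P') + 2 * (b * P') := by ring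
      have hKab : (0:ℝ) ≤ (K:ℝ) * (a * b) := by positivity
      have hmain : N' - P' ≤ (K:ℝ) * (E * ε) := by
        linarith [hsum1, hNP, t1, t2, t3, t4, t5, hKEε, hKab]
      have hmain2 : E * ((∑ k ∈ Finset.range K, A.mulVec (p k) i) - K) ≤ E * ((K:ℝ) * ε) := by
        rw [← hexp, hNP]
        calc N' - P' ≤ (K:ℝ) * (E * ε) := hmain
          _ = E * ((K:ℝ) * ε) := by ring
      have h7 := le_of_mul_le_mul_left hmain2 hE0
      linarith
  -- final rewriting of the goal
  have hgoal_eq : ∑ j, A i j * ((1 / (K:ℝ)) * ∑ k ∈ Finset.range K, p k j)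
      = (1 / (K:ℝ)) * ∑ k ∈ Finset.range K, A.mulVec (p k) i := by
    simp only [Matrix.mulVec, dotProduct, Finset.mul_sum]
    rw [Finset.sum_comm]
    exact Finset.sum_congr rfl fun k _ => Finset.sum_congr rfl fun j _ => by ring
  rw [hgoal_eq]
  have hK0' : (0:ℝ) < (K:ℝ) := by exact_mod_cast hKpos
  calc (1 / (K:ℝ)) * ∑ k ∈ Finset.range K, A.mulVec (p k) i
      ≤ (1 / (K:ℝ)) * ((K:ℝ) * (1 + ε)) := by
        apply mul_le_mul_of_nonneg_left hS (by positivity)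
    _ = 1 + ε := by field_simp
end

section
/- Let v ∈ ℝ_{>0}^n and δ' > 0 (with δ' playing the role of ωδ). If x ∈ L_{δ'}(v), i.e., x ∈ ℝ_{>0}^n satisfies Σ_{i=1}^n v_i/(n x_i) ≤ 1 and Σ_{i=1}^n x_i/(n v_i) ≤ 1 + δ', then for every coordinate i: max(0, 1 − √(δ' n))·v_i ≤ x_i ≤ (1 + √(δ' n) + δ' n)·v_i. -/
open scoped BigOperators

/-- Bounding box of the lens: any point `x` of the lens `L_{δ'}(v)` satisfies
`max(0, 1 - √(δ'n))·vᵢ ≤ xᵢ ≤ (1 + √(δ'n) + δ'n)·vᵢ` in every coordinate. -/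
theorem lens_bounding_box {n : ℕ}
    (v x : Fin n → ℝ) (δ' : ℝ) (hδ' : 0 < δ')
    (hv : ∀ i, 0 < v i) (hx : ∀ i, 0 < x i)
    (h1 : ∑ i, v i / ((n : ℝ) * x i) ≤ 1)
    (h2 : ∑ i, x i / ((n : ℝ) * v i) ≤ 1 + δ') :
    ∀ i, max 0 (1 - Real.sqrt (δ' * n)) * v i ≤ x i ∧
         x i ≤ (1 + Real.sqrt (δ' * n) + δ' * n) * v i := by
  intro i
  have hn : 0 < n := i.pos
  have hn1 : (1 : ℝ) ≤ (n : ℝ) := by exact_mod_cast hn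
  have hnne : (n : ℝ) ≠ 0 := by positivity
  -- Sum bounds without the 1/n factor
  have S1 : ∑ j, v j / x j ≤ (n : ℝ) := by
    have e : ∑ j, v j / x j = (n : ℝ) * ∑ j, v j / ((n : ℝ) * x j) := by
      rw [Finset.mul_sum]
      refine Finset.sum_congr rfl fun j _ => ?_
      field_simp [(hx j).ne']
    rw [e]
    calc (n : ℝ) * ∑ j, v j / ((n : ℝ) * x j) ≤ (n : ℝ) * 1 :=
          mul_le_mul_of_nonneg_left h1 (by positivity)
      _ = (n : ℝ) := mul_one _
  have S2 : ∑ j, x j / v j ≤ (n : ℝ) * (1 + δ') := by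
    have e : ∑ j, x j / v j = (n : ℝ) * ∑ j, x j / ((n : ℝ) * v j) := by
      rw [Finset.mul_sum]
      refine Finset.sum_congr rfl fun j _ => ?_
      field_simp [(hv j).ne']
    rw [e]
    exact mul_le_mul_of_nonneg_left h2 (by positivity)
  -- Cauchy–Schwarz on the other coordinates
  set T := (Finset.univ : Finset (Fin n)).erase i with hT
  have hcard : (T.card : ℝ) = (n : ℝ) - 1 := by
    have : T.card = n - 1 := by
      rw [hT, Finset.card_erase_of_mem (Finset.mem_univ i), Finset.card_univ, Fintype.card_fin]
    rw [this]
    push_cast [Nat.cast_sub hn]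
    ring
  have hCS : ((n : ℝ) - 1) ^ 2 ≤ (∑ j ∈ T, x j / v j) * (∑ j ∈ T, v j / x j) := by
    have h := Finset.sum_mul_sq_le_sq_mul_sq T (fun j => Real.sqrt (x j / v j))
      (fun j => Real.sqrt (v j / x j))
    have hL : ∑ j ∈ T, Real.sqrt (x j / v j) * Real.sqrt (v j / x j) = (T.card : ℝ) := by
      rw [Finset.sum_congr rfl (fun j _ => ?_), Finset.sum_const, nsmul_eq_mul, mul_one]
      rw [← Real.sqrt_mul (div_nonneg (hx j).le (hv j).le)]
      have : x j / v j * (v j / x j) = 1 := by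
        field_simp [(hx j).ne', (hv j).ne']
      rw [this, Real.sqrt_one]
    have hf : ∀ j ∈ T, Real.sqrt (x j / v j) ^ 2 = x j / v j := fun j _ =>
      Real.sq_sqrt (div_nonneg (hx j).le (hv j).le)
    have hg : ∀ j ∈ T, Real.sqrt (v j / x j) ^ 2 = v j / x j := fun j _ =>
      Real.sq_sqrt (div_nonneg (hv j).le (hx j).le)
    rw [hL, Finset.sum_congr rfl hf, Finset.sum_congr rfl hg, hcard] at h
    exact h
  -- bound the two partial sums
  have hsplit1 : (∑ j ∈ T, x j / v j) + x i / v i = ∑ j, x j / v j :=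
    Finset.sum_erase_add _ _ (Finset.mem_univ i)
  have hsplit2 : (∑ j ∈ T, v j / x j) + v i / x i = ∑ j, v j / x j :=
    Finset.sum_erase_add _ _ (Finset.mem_univ i)
  have hpos1 : (0 : ℝ) ≤ ∑ j ∈ T, x j / v j :=
    Finset.sum_nonneg fun j _ => div_nonneg (hx j).le (hv j).le
  have hpos2 : (0 : ℝ) ≤ ∑ j ∈ T, v j / x j :=
    Finset.sum_nonneg fun j _ => div_nonneg (hv j).le (hx j).le
  have hA : ∑ j ∈ T, x j / v j ≤ (n : ℝ) * (1 + δ') - x i / v i := by linarith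
  have hB : ∑ j ∈ T, v j / x j ≤ (n : ℝ) - v i / x i := by linarith
  have hKey0 : ((n : ℝ) - 1) ^ 2 ≤ ((n : ℝ) * (1 + δ') - x i / v i) * ((n : ℝ) - v i / x i) :=
    hCS.trans (mul_le_mul hA hB hpos2 (hpos1.trans hA))
  set p := x i with hp
  set q := v i with hq
  have hpp : 0 < p := hx i
  have hqq : 0 < q := hv i
  -- clear denominators
  have key2 : ((n : ℝ) - 1) ^ 2 * (q * p) ≤
      ((n : ℝ) * (1 + δ') * q - p) * ((n : ℝ) * p - q) := by
    have h := mul_le_mul_of_nonneg_right hKey0 (mul_pos hqq hpp).le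
    have e : ((n : ℝ) * (1 + δ') - p / q) * ((n : ℝ) - q / p) * (q * p) =
        ((n : ℝ) * (1 + δ') * q - p) * ((n : ℝ) * p - q) := by
      field_simp
    rw [e] at h
    exact h
  have key : (p - q) ^ 2 ≤ δ' * (n : ℝ) * (p * q) := by
    nlinarith [key2, sq_nonneg q, mul_pos hpp hqq, mul_nonneg hδ'.le (sq_nonneg q),
      mul_pos (mul_pos hδ' hqq) hqq]
  -- square root facts
  have ha : 0 < δ' * (n : ℝ) := by positivity
  set r := Real.sqrt (δ' * n) with hr
  have hr2 : r ^ 2 = δ' * (n : ℝ) := Real.sq_sqrt ha.le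
  have hr0 : 0 < r := Real.sqrt_pos.mpr ha
  clear h1 h2 S1 S2 hCS hsplit1 hsplit2 hpos1 hpos2 hA hB hKey0 key2 hcard
  constructor
  · -- lower bound
    rcases le_or_gt 1 r with h | h
    · rw [max_eq_left (by linarith)]
      simpa using hpp.le
    · rw [max_eq_right (by linarith)]
      by_contra hcon
      push_neg at hcon
      have e : (1 - r) * q = q - r * q := by ring
      have hrq : 0 < r * q := mul_pos hr0 hqq
      have h1' : 0 < q - p - r * q := by linarith
      have h2' : 0 < q - p + r * q := by linarith
      nlinarith [key, hr2, mul_pos h1' h2', mul_nonneg (mul_nonneg (sq_nonneg r) hqq.le)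
        (by linarith : (0:ℝ) ≤ q - p)]
  · -- upper bound
    by_contra hcon
    push_neg at hcon
    have e : (1 + r + δ' * (n : ℝ)) * q = q + r * q + δ' * (n : ℝ) * q := by ring
    have hrq : 0 < r * q := mul_pos hr0 hqq
    have haq : 0 < δ' * (n : ℝ) * q := mul_pos ha hqq
    have h1' : 0 < p - q - r * q - δ' * (n : ℝ) * q := by linarith
    have h2' : 0 < p - q + r * q := by linarith
    nlinarith [key, hr2, mul_pos h1' h2',
      mul_nonneg (mul_nonneg (mul_nonneg hr0.le hr0.le) hr0.le) (sq_nonneg q)]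
end

section
/- Let A be a nonnegative m×n matrix with all entries A_{ij} ≤ 1, let δ > 0 and ω ∈ (1,2], let s ∈ ℝ_{>0}^n, set v = c(s)/(1+δ), and assume A v ≤ 1_m. Let U ∈ ℝ^n be given by U_i = (1 + √(ωδn) + ωδn)·v_i. Then for every o ∈ L_{ωδ}(v) and every row A_i of A: (i) ⟨A_i, o⟩ ≤ 1 + min( √(ωδn) + ωδn, ((1+ωδ)/(1+δ))·max_{j∈[n]}(1/s_j) − 1 ); (ii) if ⟨A_i, U⟩ ≥ 1 then ⟨A_i, o⟩ ≥ 1 − min(1, 3√(ωδn)); (iii) if ⟨A_i, U⟩ < 1 then ⟨A_i, o⟩ ≤ 1. -/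
open scoped BigOperators

/-- Width guarantees of the feasibility oracle: any point `o` in the lens
`L_{ωδ}(v)`, where `v = c(s)/(1+δ) ∈ P`, satisfies (i) the upper width bound,
(ii) the lower width bound for non-redundant constraints (those covering the
upper vertex `U` of the bounding box), and (iii) all redundant constraints. -/
theorem oracle_width_guarantees {m n : ℕ} (hn : 0 < n)
    (A : Matrix (Fin m) (Fin n) ℝ)
    (hA0 : ∀ i j, 0 ≤ A i j) (hA1 : ∀ i j, A i j ≤ 1)
    (δ ω : ℝ) (hδ : 0 < δ) (hω1 : 1 < ω) (hω2 : ω ≤ 2)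
    (s : Fin n → ℝ) (hs : ∀ j, 0 < s j)
    (v : Fin n → ℝ) (hv : ∀ j, v j = (1 / ((n : ℝ) * s j)) / (1 + δ))
    (hAv : ∀ i, ∑ j, A i j * v j ≤ 1)
    (U : Fin n → ℝ) (hU : ∀ j, U j = (1 + Real.sqrt (ω * δ * n) + ω * δ * n) * v j)
    (o : Fin n → ℝ) (ho_pos : ∀ j, 0 < o j)
    (ho1 : ∑ j, (1 / ((n : ℝ) * o j)) * v j ≤ 1)
    (ho2 : ∑ j, (1 / ((n : ℝ) * v j)) * o j ≤ 1 + ω * δ) :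
    ∀ i,
      (∑ j, A i j * o j ≤ 1 + min (Real.sqrt (ω * δ * n) + ω * δ * n)
          ((1 + ω * δ) / (1 + δ) * (⨆ j, 1 / s j) - 1)) ∧
      (1 ≤ ∑ j, A i j * U j → 1 - min 1 (3 * Real.sqrt (ω * δ * n)) ≤ ∑ j, A i j * o j) ∧
      (∑ j, A i j * U j < 1 → ∑ j, A i j * o j ≤ 1) := by
  have hnR : (0:ℝ) < n := by exact_mod_cast hn
  have hδ1 : (0:ℝ) < 1 + δ := by linarith
  have hvpos : ∀ j, 0 < v j := fun j => by
    rw [hv j]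
    exact div_pos (div_pos one_pos (mul_pos hnR (hs j))) hδ1
  set c : ℝ := ω * δ * n with hc_def
  have hc : 0 < c := by positivity
  set r : ℝ := Real.sqrt c with hr_def
  have hr2 : r ^ 2 = c := Real.sq_sqrt hc.le
  have hrpos : 0 < r := Real.sqrt_pos.2 hc
  set K : ℝ := 1 + r + c with hK_def
  have hK1 : 1 < K := by rw [hK_def]; linarith
  have hKpos : 0 < K := by linarith
  clear_value K
  clear_value r
  clear_value c
  -- sum bounds
  have hP : ∑ k, v k / o k ≤ n := by
    have hsum_eq : ∑ k, (1 / ((n : ℝ) * o k)) * v k = (∑ k, v k / o k) / n := by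
      rw [Finset.sum_div]
      refine Finset.sum_congr rfl fun k _ => ?_
      rw [one_div, inv_mul_eq_div, div_div, mul_comm (o k) ((n:ℝ))]
    rw [hsum_eq, div_le_one hnR] at ho1
    exact ho1
  have hQ : ∑ k, o k / v k ≤ n * (1 + ω * δ) := by
    have hsum_eq : ∑ k, (1 / ((n : ℝ) * v k)) * o k = (∑ k, o k / v k) / n := by
      rw [Finset.sum_div]
      refine Finset.sum_congr rfl fun k _ => ?_
      rw [one_div, inv_mul_eq_div, div_div, mul_comm (v k) ((n:ℝ))]
    rw [hsum_eq, div_le_iff₀ hnR] at ho2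
    linarith [ho2]
  have hpair : ∀ j, o j / v j + v j / o j ≤ 2 + c := by
    intro j
    have h2 : ∀ k ∈ Finset.univ.erase j, (2:ℝ) ≤ v k / o k + o k / v k := by
      intro k _
      have hv' := hvpos k; have ho' := ho_pos k
      rw [div_add_div _ _ (ne_of_gt ho') (ne_of_gt hv'), le_div_iff₀ (by positivity)]
      nlinarith [sq_nonneg (v k - o k)]
    have hcard : (Finset.univ.erase j).card = n - 1 := by
      rw [Finset.card_erase_of_mem (Finset.mem_univ j), Finset.card_univ, Fintype.card_fin]
    have hsum : (2:ℝ) * ((n:ℝ) - 1) ≤ ∑ k ∈ Finset.univ.erase j, (v k / o k + o k / v k) := by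
      have h := Finset.card_nsmul_le_sum (Finset.univ.erase j)
        (fun k => v k / o k + o k / v k) 2 h2
      rw [hcard] at h
      have hn1 : ((n - 1 : ℕ) : ℝ) = (n : ℝ) - 1 := by
        rw [Nat.cast_sub hn]; simp
      calc (2:ℝ) * ((n:ℝ) - 1) = ((n-1 : ℕ) : ℝ) * 2 := by rw [hn1]; ring
        _ ≤ _ := by simpa [nsmul_eq_mul] using h
    have hsplitP : ∑ k, v k / o k = v j / o j + ∑ k ∈ Finset.univ.erase j, v k / o k :=
      (Finset.add_sum_erase _ _ (Finset.mem_univ j)).symm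
    have hsplitQ : ∑ k, o k / v k = o j / v j + ∑ k ∈ Finset.univ.erase j, o k / v k :=
      (Finset.add_sum_erase _ _ (Finset.mem_univ j)).symm
    have hsum2 : ∑ k ∈ Finset.univ.erase j, (v k / o k + o k / v k)
        = (∑ k ∈ Finset.univ.erase j, v k / o k) + ∑ k ∈ Finset.univ.erase j, o k / v k :=
      Finset.sum_add_distrib
    have hcne : c = n * (ω * δ) := by rw [hc_def]; ring
    rw [hsplitP] at hP; rw [hsplitQ] at hQ; rw [hsum2] at hsum
    linarith
  -- quadratic lemma
  have key : ∀ t : ℝ, 0 < t → t + 1 / t ≤ 2 + c → t ≤ K := by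
    intro t htpos h
    have hquad : t ^ 2 - (2 + c) * t + 1 ≤ 0 := by
      have h' := mul_le_mul_of_nonneg_right h htpos.le
      have h1t : (1 / t) * t = 1 := by field_simp
      nlinarith
    by_contra hcon
    push_neg at hcon
    rw [hK_def] at hcon
    have h1 : 0 < t - (1 + r + c) := by linarith
    have h2 : 0 < t + r - 1 := by linarith
    nlinarith [mul_pos h1 h2]
  have hup : ∀ j, o j ≤ K * v j := by
    intro j
    have hv' := hvpos j; have ho' := ho_pos j
    have hinv : v j / o j = 1 / (o j / v j) := by field_simp
    have htK : o j / v j ≤ K := key _ (by positivity) (by rw [← hinv]; exact hpair j)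
    calc o j = (o j / v j) * v j := by field_simp
      _ ≤ K * v j := mul_le_mul_of_nonneg_right htK hv'.le
  have hlo : ∀ j, v j / K ≤ o j := by
    intro j
    have hv' := hvpos j; have ho' := ho_pos j
    have hinv : o j / v j = 1 / (v j / o j) := by field_simp
    have htK : v j / o j ≤ K := key _ (by positivity) (by rw [← hinv]; linarith [hpair j])
    rw [div_le_iff₀ hKpos]
    calc v j = (v j / o j) * o j := by field_simp
      _ ≤ K * o j := mul_le_mul_of_nonneg_right htK ho'.le
      _ = o j * K := by ring
  intro i
  have hAvi := hAv i
  have hAoU : ∑ j, A i j * o j ≤ ∑ j, A i j * U j := by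
    refine Finset.sum_le_sum fun j _ => ?_
    rw [hU j]
    exact mul_le_mul_of_nonneg_left (hup j) (hA0 i j)
  have hAU_eq : ∑ j, A i j * U j = K * ∑ j, A i j * v j := by
    rw [Finset.mul_sum]
    exact Finset.sum_congr rfl fun j _ => by rw [hU j]; ring
  refine ⟨?_, ?_, ?_⟩
  · -- (i)
    rw [← min_add_add_left]
    refine le_min ?_ ?_
    · calc ∑ j, A i j * o j ≤ ∑ j, A i j * U j := hAoU
        _ = K * ∑ j, A i j * v j := hAU_eq
        _ ≤ K * 1 := mul_le_mul_of_nonneg_left hAvi hKpos.le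
        _ = 1 + (r + c) := by rw [hK_def]; ring
    · have hM : ∀ j, 1 / s j ≤ ⨆ j, 1 / s j := fun j =>
        le_ciSup (f := fun j => 1 / s j) (Set.Finite.bddAbove (Set.finite_range _)) j
    -- o j ≤ ((1+ωδ)... handled by sum bound
      have hbound : ∑ j, o j ≤ (1 + ω * δ) / (1 + δ) * (⨆ j, 1 / s j) := by
        have hMpos : 0 < ⨆ j, 1 / s j := by
          obtain ⟨j⟩ := Fin.pos_iff_nonempty.mp hn
          exact lt_of_lt_of_le (div_pos one_pos (hs j)) (hM j)
        have hstep : ∀ j, o j ≤ (⨆ j, 1 / s j) / (1 + δ) * ((1 / ((n : ℝ) * v j)) * o j) := by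
          intro j
          have hnv : (n : ℝ) * v j = (1 / s j) / (1 + δ) := by
            have h1 := (hs j).ne'; have h2 := hδ1.ne'; have h3 := hnR.ne'
            rw [hv j]; field_simp
          have h1 : o j = ((n : ℝ) * v j) * ((1 / ((n : ℝ) * v j)) * o j) := by
            have h4 : ((n : ℝ) * v j) ≠ 0 := (mul_pos hnR (hvpos j)).ne'
            field_simp
            rw [mul_div_assoc, div_self (hvpos j).ne', mul_one]
          have hXnn : 0 ≤ (1 / ((n : ℝ) * v j)) * o j :=
            le_of_lt (mul_pos (div_pos one_pos (mul_pos hnR (hvpos j))) (ho_pos j))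
          have hle : (n : ℝ) * v j ≤ (⨆ j, 1 / s j) / (1 + δ) := by
            rw [hnv]; exact div_le_div_of_nonneg_right (hM j) hδ1.le
          calc o j = ((n : ℝ) * v j) * ((1 / ((n : ℝ) * v j)) * o j) := h1
            _ ≤ (⨆ j, 1 / s j) / (1 + δ) * ((1 / ((n : ℝ) * v j)) * o j) :=
                mul_le_mul_of_nonneg_right hle hXnn
        calc ∑ j, o j ≤ ∑ j, (⨆ j, 1 / s j) / (1 + δ) * ((1 / ((n : ℝ) * v j)) * o j) :=
              Finset.sum_le_sum fun j _ => hstep j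
          _ = (⨆ j, 1 / s j) / (1 + δ) * ∑ j, (1 / ((n : ℝ) * v j)) * o j := by
              rw [Finset.mul_sum]
          _ ≤ (⨆ j, 1 / s j) / (1 + δ) * (1 + ω * δ) :=
              mul_le_mul_of_nonneg_left ho2 (by positivity)
          _ = (1 + ω * δ) / (1 + δ) * (⨆ j, 1 / s j) := by ring
      have hAsum : ∑ j, A i j * o j ≤ ∑ j, o j := by
        refine Finset.sum_le_sum fun j _ => ?_
        calc A i j * o j ≤ 1 * o j := mul_le_mul_of_nonneg_right (hA1 i j) (ho_pos j).le
          _ = o j := one_mul _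
      linarith
  · -- (ii)
    intro hge
    rcases le_total (1:ℝ) (3 * r) with hcase | hcase
    · rw [min_eq_left hcase]
      have : (0:ℝ) ≤ ∑ j, A i j * o j :=
        Finset.sum_nonneg fun j _ => mul_nonneg (hA0 i j) (ho_pos j).le
      linarith
    · rw [min_eq_right hcase]
      have hAvlo : 1 / K ≤ ∑ j, A i j * v j := by
        rw [hAU_eq] at hge
        rw [div_le_iff₀ hKpos, mul_comm]
        exact hge
      have hAolo : (1 / K) / K ≤ ∑ j, A i j * o j := by
        have h1 : ∑ j, A i j * (v j / K) ≤ ∑ j, A i j * o j :=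
          Finset.sum_le_sum fun j _ => mul_le_mul_of_nonneg_left (hlo j) (hA0 i j)
        have h2 : ∑ j, A i j * (v j / K) = (∑ j, A i j * v j) / K := by
          rw [Finset.sum_div]
          exact Finset.sum_congr rfl fun j _ => by ring
        rw [h2] at h1
        exact le_trans (div_le_div_of_nonneg_right hAvlo hKpos.le) h1
      have hfinal : 1 - 3 * r ≤ (1 / K) / K := by
        have h3r : 0 ≤ 1 - 3 * r := by linarith
        have hKr : K = 1 + r + r ^ 2 := by rw [hK_def, hr2]
        have hpoly : (1 - 3 * r) * ((1 + r + r ^ 2) * (1 + r + r ^ 2)) ≤ 1 := by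
          have hexp : (1 - 3 * r) * ((1 + r + r ^ 2) * (1 + r + r ^ 2))
              = 1 - (r + 3 * r ^ 2 + 7 * r ^ 3 + 5 * r ^ 4 + 3 * r ^ 5) := by ring
          rw [hexp]
          linarith [pow_nonneg hrpos.le 2, pow_nonneg hrpos.le 3, pow_nonneg hrpos.le 4,
            pow_nonneg hrpos.le 5, hrpos.le]
        rw [div_div, le_div_iff₀ (mul_pos hKpos hKpos), hKr]
        exact hpoly
      linarith
  · -- (iii)
    intro hlt
    exact le_of_lt (lt_of_le_of_lt hAoU hlt)
end

section
/- Let n ≥ 2, s ∈ ℝ_{>0}^n, and h ∈ ℝ_{≥0}^n with ⟨h, c(s)⟩ ≥ 1 + 1/n, i.e., Σ_{i=1}^n h_i/(n s_i) ≥ 1 + 1/n. Then Π_{i=1}^n ( (1 − 1/n²) s_i + (1/n²) h_i )^{−1} ≤ exp( −1/(2(n+1)²) ) · Π_{i=1}^n s_i^{−1}. Equivalently, the volume of the corner simplex bounded by the constraint (1−1/n²)s + (1/n²)h and the positive orthant is at most exp(−1/(2(n+1)²)) times the volume of the corner simplex bounded by s. -/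
open scoped BigOperators


lemma exp_neg_quartic_bounds {t : ℝ} (h0 : 0 ≤ t) (h1 : t ≤ 1) :
    1 - t + t^2/2 - t^3/6 - 5*t^4/96 ≤ Real.exp (-t) ∧
    Real.exp (-t) ≤ 1 - t + t^2/2 - t^3/6 + 5*t^4/96 := by
  have habs : |(-t)| ≤ 1 := by rw [abs_neg, abs_of_nonneg h0]; exact h1
  have hb := Real.exp_bound habs (n := 4) (by norm_num)
  rw [abs_neg, abs_of_nonneg h0] at hb
  have hsum : ∑ m ∈ Finset.range 4, (-t) ^ m / m.factorial = 1 - t + t^2/2 - t^3/6 := by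
    simp [Finset.sum_range_succ, Nat.factorial]
    ring
  rw [hsum] at hb
  norm_num [Nat.factorial] at hb
  have hb' := abs_sub_le_iff.1 hb
  constructor <;> nlinarith [hb'.1, hb'.2]

lemma yl_step1 {y : ℝ} (h0 : 0 < y) (h1 : y ≤ 1/4) :
    Real.exp (-(y + y^2/2 + y^3)) ≤ 1 - y := by
  have ht0 : 0 ≤ y + y^2/2 + y^3 := by positivity
  have ht1 : y + y^2/2 + y^3 ≤ 1 := by nlinarith
  have h := (exp_neg_quartic_bounds ht0 ht1).2
  have hy2 : 0 < y^2 := by positivity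
  have hy3 : 0 < y^3 := by positivity
  nlinarith [h, mul_nonneg (mul_nonneg h0.le h0.le) h0.le,
    mul_nonneg hy3.le (by linarith : (0:ℝ) ≤ 1/4 - y),
    mul_nonneg (mul_nonneg hy3.le hy3.le) h0.le,
    mul_nonneg (mul_nonneg hy2.le hy2.le) h0.le,
    mul_nonneg hy2.le hy2.le,
    mul_nonneg (mul_nonneg hy2.le hy2.le) (by linarith : (0:ℝ) ≤ 1/4 - y),
    mul_nonneg (mul_nonneg (mul_nonneg hy2.le hy2.le) h0.le) (by linarith : (0:ℝ) ≤ 1/4 - y)]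

lemma yl_poly_q {u : ℝ} (hu0 : 0 < u) (hu3 : u ≤ 1/3) :
    1 ≤ (1+u) * (1 - (u - u^2/2 - u^3/2 + u^4 + u^5 - u^6)
        + (u - u^2/2 - u^3/2)^2/2 - u^3/6 - 5*u^4/96) := by
  nlinarith [mul_nonneg (mul_nonneg (mul_nonneg hu0.le hu0.le) hu0.le) (by linarith : (0:ℝ) ≤ 1/3 - u),
    mul_nonneg (mul_nonneg (mul_nonneg (mul_nonneg hu0.le hu0.le) hu0.le) hu0.le) (by linarith : (0:ℝ) ≤ 1/3 - u),
    mul_nonneg (mul_nonneg hu0.le hu0.le) (by linarith : (0:ℝ) ≤ 1/3 - u),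
    mul_nonneg hu0.le (by linarith : (0:ℝ) ≤ 1/3 - u),
    pow_nonneg hu0.le 3, pow_nonneg hu0.le 5, pow_nonneg hu0.le 6, pow_nonneg hu0.le 7]

lemma yl_exp_le {u D D1 : ℝ} (hu0 : 0 < u) (hu3 : u ≤ 1/3)
    (hD0 : 0 ≤ D) (hDu : D ≤ u) (hD10 : 0 ≤ D1) (hDD1 : D1 ≤ D)
    (hq : 1 ≤ (1+u) * (1 - D + D1^2/2 - u^3/6 - 5*u^4/96)) :
    Real.exp D ≤ 1 + u := by
  have hDle1 : D ≤ 1 := by linarith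
  have hlow := (exp_neg_quartic_bounds hD0 hDle1).1
  have hsq : D1^2 ≤ D^2 := pow_le_pow_left₀ hD10 hDD1 2
  have hcube : D^3 ≤ u^3 := pow_le_pow_left₀ hD0 hDu 3
  have hquart : D^4 ≤ u^4 := pow_le_pow_left₀ hD0 hDu 4
  have h2 : 1 - D + D1^2/2 - u^3/6 - 5*u^4/96 ≤ Real.exp (-D) := by linarith
  have hkey : 1 ≤ (1+u) * Real.exp (-D) :=
    le_trans hq (mul_le_mul_of_nonneg_left h2 (by linarith))
  have hmul : Real.exp D * Real.exp (-D) = 1 := by rw [← Real.exp_add]; simp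
  nlinarith [Real.exp_pos D, Real.exp_pos (-D), hkey, hmul]

lemma yl_expD {u : ℝ} (hu0 : 0 < u) (hu3 : u ≤ 1/3) :
    Real.exp (u - u^2/2 - u^3/2 + u^4 + u^5 - u^6) ≤ 1 + u := by
  have h13 : (0:ℝ) ≤ 1/3 - u := by linarith
  have h1u : (0:ℝ) ≤ 1 - u := by linarith
  have hD0 : 0 ≤ u - u^2/2 - u^3/2 + u^4 + u^5 - u^6 := by
    nlinarith [mul_nonneg hu0.le h13, mul_nonneg (mul_nonneg hu0.le hu0.le) h13,
      pow_nonneg hu0.le 4, mul_nonneg (pow_nonneg hu0.le 5) h1u]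
  have hDu : u - u^2/2 - u^3/2 + u^4 + u^5 - u^6 ≤ u := by
    nlinarith [mul_nonneg (mul_nonneg hu0.le hu0.le) h13,
      mul_nonneg (mul_nonneg (mul_nonneg hu0.le hu0.le) hu0.le) h13,
      mul_nonneg (mul_nonneg (mul_nonneg (mul_nonneg hu0.le hu0.le) hu0.le) hu0.le) h13,
      mul_nonneg (mul_nonneg (mul_nonneg (mul_nonneg (mul_nonneg hu0.le hu0.le) hu0.le) hu0.le) hu0.le) h13,
      pow_nonneg hu0.le 6]
  have hD10 : 0 ≤ u - u^2/2 - u^3/2 := by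
    nlinarith [mul_nonneg hu0.le h13, mul_nonneg (mul_nonneg hu0.le hu0.le) h13]
  have hDD1 : u - u^2/2 - u^3/2 ≤ u - u^2/2 - u^3/2 + u^4 + u^5 - u^6 := by
    nlinarith [mul_nonneg (pow_nonneg hu0.le 5) h1u, pow_nonneg hu0.le 4]
  exact yl_exp_le hu0 hu3 hD0 hDu hD10 hDD1 (yl_poly_q hu0 hu3)

lemma prod_linear_lb {ι : Type*} [DecidableEq ι] (a b : ℝ) (ha : 0 ≤ a) (hb : 0 ≤ b)
    (t : ι → ℝ) :
    ∀ (S : Finset ι), S.Nonempty → (∀ i ∈ S, 0 ≤ t i) → ∀ m : ℝ, 0 ≤ m →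
      m ≤ ∑ i ∈ S, t i → a ^ (S.card - 1) * (a + b * m) ≤ ∏ i ∈ S, (a + b * t i) := by
  intro S
  induction S using Finset.induction_on with
  | empty => intro h; exact absurd rfl h.ne_empty
  | insert _ _ hnotmem =>
    rename_i j S ih
    intro _ ht m hm hsum
    rw [Finset.prod_insert hnotmem, Finset.sum_insert hnotmem] at *
    rcases S.eq_empty_or_nonempty with rfl | hS
    · simp only [Finset.prod_empty, Finset.sum_empty, add_zero] at *
      have : (insert j (∅:Finset ι)).card - 1 = 0 := by simp
      rw [this, pow_zero, one_mul, mul_one]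
      have := ht j (Finset.mem_insert_self _ _)
      nlinarith
    · have htj : 0 ≤ t j := ht j (Finset.mem_insert_self _ _)
      have ht' : ∀ i ∈ S, 0 ≤ t i := fun i hi => ht i (Finset.mem_insert_of_mem hi)
      obtain ⟨m', hm'0, hm'1, hsum'⟩ : ∃ m', 0 ≤ m' ∧ m - t j ≤ m' ∧ m' ≤ ∑ i ∈ S, t i := by
        refine ⟨max (m - t j) 0, le_max_right _ _, le_max_left _ _, ?_⟩
        rcases max_cases (m - t j) 0 with ⟨hme, _⟩ | ⟨hme, _⟩ <;> rw [hme]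
        · linarith
        · exact Finset.sum_nonneg ht'
      have hIH := ih hS ht' m' hm'0 hsum'
      have hcard : (insert j S).card - 1 = S.card := by
        rw [Finset.card_insert_of_notMem hnotmem]; omega
      rw [hcard]
      have hpow : (0:ℝ) ≤ a ^ (S.card - 1) := pow_nonneg ha _
      have hkey : a * (a + b * m) ≤ (a + b * t j) * (a + b * m') := by
        have h1 : a * b * m ≤ a * b * (m' + t j) := by
          have := mul_nonneg ha hb; nlinarith
        nlinarith [mul_nonneg (mul_nonneg hb hb) (mul_nonneg htj hm'0)]
      have hSc : S.card - 1 + 1 = S.card := Nat.succ_pred_eq_of_pos (Finset.card_pos.2 hS)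
      have hap : a ^ S.card = a ^ (S.card - 1) * a := by rw [← pow_succ, hSc]
      calc a ^ S.card * (a + b * m) = a ^ (S.card - 1) * (a * (a + b * m)) := by
            rw [hap]; ring
        _ ≤ a ^ (S.card - 1) * ((a + b * t j) * (a + b * m')) := by
            exact mul_le_mul_of_nonneg_left hkey hpow
        _ = (a + b * t j) * (a ^ (S.card - 1) * (a + b * m')) := by ring
        _ ≤ (a + b * t j) * ∏ i ∈ S, (a + b * t i) := by
            apply mul_le_mul_of_nonneg_left hIH
            nlinarith [mul_nonneg hb htj]

lemma yl_numeric {n : ℕ} (hn : 2 ≤ n) :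
    Real.exp (1/(2*((n:ℝ)+1)^2)) ≤ (1 - 1/(n:ℝ)^2)^(n-1) * (1 + 1/(n:ℝ)) := by
  rcases eq_or_lt_of_le hn with h2 | h3
  · -- n = 2
    subst h2
    norm_num
    have hadd := Real.add_one_le_exp (-(1/18) : ℝ)
    have hmul : Real.exp (1/18 : ℝ) * Real.exp (-(1/18) : ℝ) = 1 := by
      rw [← Real.exp_add]; norm_num
    nlinarith [Real.exp_pos ((1:ℝ)/18), Real.exp_pos (-(1:ℝ)/18)]
  · have hn3 : 3 ≤ n := h3
    have hx : (3:ℝ) ≤ (n:ℝ) := by exact_mod_cast hn3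
    have hx0 : (0:ℝ) < (n:ℝ) := by linarith
    set x : ℝ := (n:ℝ) with hxdef
    obtain ⟨u, hudef⟩ : ∃ u : ℝ, u = 1/x := ⟨_, rfl⟩
    have hu0 : 0 < u := by rw [hudef]; positivity
    have hux : u * x = 1 := by rw [hudef]; field_simp
    have hu3 : u ≤ 1/3 := by rw [hudef, div_le_div_iff₀ hx0 (by norm_num)]; linarith
    have hy0 : 0 < u^2 := by positivity
    have hy4 : u^2 ≤ 1/4 := by nlinarith
    have hs1 : Real.exp (-(u^2 + (u^2)^2/2 + (u^2)^3)) ≤ 1 - u^2 := yl_step1 hy0 hy4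
    have hpow : Real.exp (-(u^2 + (u^2)^2/2 + (u^2)^3)) ^ (n-1) ≤ (1 - u^2) ^ (n-1) :=
      pow_le_pow_left₀ (Real.exp_nonneg _) hs1 _
    have hcast : ((n - 1 : ℕ) : ℝ) = x - 1 := by
      rw [Nat.cast_sub (by omega)]; simp [hxdef]
    have hexppow : Real.exp ((x-1) * (-(u^2 + (u^2)^2/2 + (u^2)^3)))
        = Real.exp (-(u^2 + (u^2)^2/2 + (u^2)^3)) ^ (n-1) := by
      rw [← Real.exp_nat_mul, hcast]
    -- exponent bookkeeping
    have hxu : x = 1/u := by rw [hudef]; field_simp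
    have hxt : (x-1) * (u^2 + (u^2)^2/2 + (u^2)^3)
        = u + u^3/2 + u^5 - u^2 - u^4/2 - u^6 := by
      rw [hxu]; field_simp; ring
    have hcu : 1/(2*(x+1)^2) ≤ u^2/2 - u^3 + 3/2*u^4 := by
      have hxpos : (0:ℝ) < 2*(x+1)^2 := by positivity
      rw [div_le_iff₀ hxpos]
      have hexp : (u^2/2 - u^3 + 3/2*u^4) * (2*(x+1)^2) = 1 + 4*u^3 + 3*u^4 := by
        rw [hxu]; field_simp; ring
      rw [hexp]
      nlinarith [pow_nonneg hu0.le 3, pow_nonneg hu0.le 4]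
    have hdD : 1/(2*(x+1)^2) + (x-1) * (u^2 + (u^2)^2/2 + (u^2)^3)
        ≤ u - u^2/2 - u^3/2 + u^4 + u^5 - u^6 := by
      rw [hxt]; linarith
    have hexpD := yl_expD hu0 hu3
    have hfinal : Real.exp (1/(2*(x+1)^2) + (x-1) * (u^2 + (u^2)^2/2 + (u^2)^3)) ≤ 1 + u :=
      le_trans (Real.exp_le_exp.2 hdD) hexpD
    have hsplit : Real.exp (1/(2*(x+1)^2))
        = Real.exp (1/(2*(x+1)^2) + (x-1) * (u^2 + (u^2)^2/2 + (u^2)^3))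
          * Real.exp ((x-1) * (-(u^2 + (u^2)^2/2 + (u^2)^3))) := by
      rw [← Real.exp_add]; ring_nf
    rw [hsplit]
    have hy1 : 1 - u^2 ≤ 1 := by nlinarith
    calc Real.exp (1/(2*(x+1)^2) + (x-1) * (u^2 + (u^2)^2/2 + (u^2)^3))
          * Real.exp ((x-1) * (-(u^2 + (u^2)^2/2 + (u^2)^3)))
        ≤ (1 + u) * ((1 - u^2) ^ (n-1)) := by
          rw [hexppow]
          exact mul_le_mul hfinal hpow (pow_nonneg (Real.exp_nonneg _) _) (by linarith)
      _ = (1 - 1/x^2)^(n-1) * (1 + 1/x) := by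
          rw [← hudef]
          have : u^2 = 1/x^2 := by rw [hudef]; ring
          rw [this, mul_comm]

/-- Volume decrease in one Yamnitsky–Levin step: if the constraint `h` is not
covered by the centroid of the corner simplex of `s`, i.e.
`⟨h, c(s)⟩ ≥ 1 + 1/n`, then the corner simplex of the convex combination
`(1 - 1/n²)s + (1/n²)h` has volume at most `exp(-1/(2(n+1)²))` times the volume
of the corner simplex of `s`. -/
theorem yl_volume_decrease {n : ℕ} (hn : 2 ≤ n)
    (s h : Fin n → ℝ) (hs : ∀ i, 0 < s i) (hh : ∀ i, 0 ≤ h i)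
    (hcov : 1 + 1 / (n : ℝ) ≤ ∑ i, h i / ((n : ℝ) * s i)) :
    ∏ i, ((1 - 1 / (n : ℝ) ^ 2) * s i + (1 / (n : ℝ) ^ 2) * h i)⁻¹
      ≤ Real.exp (-1 / (2 * ((n : ℝ) + 1) ^ 2)) * ∏ i, (s i)⁻¹ := by
  have hx2 : (2:ℝ) ≤ (n:ℝ) := by exact_mod_cast hn
  have hx0 : (0:ℝ) < (n:ℝ) := by linarith
  set a : ℝ := 1 - 1/(n:ℝ)^2 with hadef
  set b : ℝ := 1/(n:ℝ)^2 with hbdef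
  have hb0 : 0 < b := by rw [hbdef]; positivity
  have ha0 : 0 < a := by
    rw [hadef]
    have : 1/(n:ℝ)^2 ≤ 1/4 := by
      rw [div_le_div_iff₀ (by positivity) (by norm_num)]; nlinarith
    linarith
  have ht0 : ∀ i, 0 ≤ h i / s i := fun i => div_nonneg (hh i) (hs i).le
  -- sum condition
  have hsum : (n:ℝ) + 1 ≤ ∑ i, h i / s i := by
    have heq : ∑ i, h i / ((n:ℝ) * s i) = (∑ i, h i / s i) / (n:ℝ) := by
      rw [Finset.sum_div]
      exact Finset.sum_congr rfl fun i _ => by rw [div_div, mul_comm]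
    rw [heq, le_div_iff₀ hx0] at hcov
    calc (n:ℝ) + 1 = (1 + 1/(n:ℝ)) * (n:ℝ) := by field_simp
      _ ≤ ∑ i, h i / s i := hcov
  -- product lower bound
  have hne : (Finset.univ : Finset (Fin n)).Nonempty := by
    have : Nonempty (Fin n) := ⟨⟨0, by omega⟩⟩
    exact Finset.univ_nonempty
  have hcard : (Finset.univ : Finset (Fin n)).card = n := by simp
  have hprod : a ^ (n-1) * (a + b * ((n:ℝ)+1)) ≤ ∏ i, (a + b * (h i / s i)) := by
    have := prod_linear_lb a b ha0.le hb0.le (fun i => h i / s i) Finset.univ hne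
      (fun i _ => ht0 i) ((n:ℝ)+1) (by positivity) hsum
    rwa [hcard] at this
  have hab : a + b * ((n:ℝ)+1) = 1 + 1/(n:ℝ) := by
    rw [hadef, hbdef]; field_simp; ring
  have hexp : Real.exp (1/(2*((n:ℝ)+1)^2)) ≤ ∏ i, (a + b * (h i / s i)) := by
    refine le_trans ?_ hprod
    rw [hab]
    exact yl_numeric hn
  -- positivity of factors
  have hfac : ∀ i, 0 < a + b * (h i / s i) := fun i => by nlinarith [ht0 i]
  have hP : 0 < ∏ i, (a + b * (h i / s i)) := Finset.prod_pos fun i _ => hfac i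
  -- rewrite each factor
  have hfeq : ∀ i, a * s i + b * h i = s i * (a + b * (h i / s i)) := fun i => by
    field_simp [(hs i).ne']
  have hgoal_lhs : ∏ i, (a * s i + b * h i)⁻¹
      = (∏ i, (s i)⁻¹) * (∏ i, (a + b * (h i / s i)))⁻¹ := by
    rw [← Finset.prod_inv_distrib, ← Finset.prod_mul_distrib]
    exact Finset.prod_congr rfl fun i _ => by rw [hfeq i, mul_inv]
  have hinv : (∏ i, (a + b * (h i / s i)))⁻¹ ≤ Real.exp (-1 / (2*((n:ℝ)+1)^2)) := by
    have h1 : (∏ i, (a + b * (h i / s i)))⁻¹ ≤ (Real.exp (1/(2*((n:ℝ)+1)^2)))⁻¹ :=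
      inv_anti₀ (Real.exp_pos _) hexp
    rwa [← Real.exp_neg, neg_div'] at h1
  have hsinv : 0 ≤ ∏ i, (s i)⁻¹ := Finset.prod_nonneg fun i _ => inv_nonneg.2 (hs i).le
  calc ∏ i, (a * s i + b * h i)⁻¹
      = (∏ i, (s i)⁻¹) * (∏ i, (a + b * (h i / s i)))⁻¹ := hgoal_lhs
    _ ≤ (∏ i, (s i)⁻¹) * Real.exp (-1 / (2*((n:ℝ)+1)^2)) :=
        mul_le_mul_of_nonneg_left hinv hsinv
    _ = Real.exp (-1 / (2*((n:ℝ)+1)^2)) * ∏ i, (s i)⁻¹ := mul_comm _ _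
end

section
/- Let n ≥ 2 and let A be a normalized nonnegative m×n matrix (max_{i∈[m]} A_{ij} = 1 for every column j). Define λ^{(1)} = (1/n) Σ_{j=1}^n e_{ℓ_j} ∈ Δ_m, where for each j, ℓ_j ∈ argmax_{i∈[m]} A_{ij}, and for k ≥ 1 define λ^{(k+1)} = (1 − 1/n²) λ^{(k)} + (1/n²) e_{j^{(k)}}, where j^{(k)} ∈ argmax_{j∈[m]} ⟨A_j, c(A^Tλ^{(k)})⟩. If for every k ∈ {1, …, K} the stopping condition fails, i.e., max_{j∈[m]} ⟨A_j, c(A^Tλ^{(k)})⟩ > 1 + 1/n, then K ≤ 2(n+1)² n log n. In particular, the Yamnitsky–Levin stage finds a k with max_{j∈[m]} ⟨A_j, c(A^Tλ^{(k)})⟩ ≤ 1 + 1/n within 2(n+1)² n log n + 1 iterations. -/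
lemma log_one_sub_ge {x : ℝ} (h : |x| < 1) :
    -(x + x^2/2 + x^3/3 + x^4/4) - |x|^5/(1-|x|) ≤ Real.log (1 - x) := by
  have h1 := Real.abs_log_sub_add_sum_range_le h 4
  have h2 : ∑ i ∈ Finset.range 4, x^(i+1)/((i:ℝ)+1) = x + x^2/2 + x^3/3 + x^4/4 := by
    simp [Finset.sum_range_succ]
    ring
  rw [h2] at h1
  have h3 := (abs_le.1 h1).1
  linarith

lemma log_ge_one_sub_inv {x : ℝ} (hx : 0 < x) : 1 - 1/x ≤ Real.log x := by
  have h := Real.log_le_sub_one_of_pos (show (0:ℝ) < x⁻¹ by positivity)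
  rw [Real.log_inv, inv_eq_one_div] at h
  linarith

lemma yl_core_real (N : ℝ) (hN4 : 4 ≤ N) :
    1 / (2 * (N+1)^2) ≤ N * Real.log (1 + 1/N) + (N - 1) * Real.log (1 - 1/N) := by
  have hNpos : (0:ℝ) < N := by linarith
  have hd : (0:ℝ) < N - 1 := by linarith
  have habs : |(1/N : ℝ)| < 1 := by
    rw [abs_of_pos (by positivity), div_lt_one hNpos]; linarith
  have habs' : |(-(1/N) : ℝ)| < 1 := by rwa [abs_neg]
  have e1 := log_one_sub_ge habs'
  have e2 := log_one_sub_ge habs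
  rw [show (1 : ℝ) - -(1/N) = 1 + 1/N by ring] at e1
  rw [abs_neg, abs_of_pos (show (0:ℝ) < 1/N by positivity)] at e1
  rw [abs_of_pos (show (0:ℝ) < 1/N by positivity)] at e2
  have hq : 0 ≤ 10*N^4 - 29*N^3 - 37*N^2 - N + 9 := by nlinarith [sq_nonneg N, sq_nonneg (N-4)]
  have e3 : (1/(2*N^2) + 1/(3*N^3) - (2*N-1)/(4*N^4) - (2*N-1)/(N^4*(N-1))) - 1/(2*(N+1)^2)
      = (10*N^4 - 29*N^3 - 37*N^2 - N + 9) / (12*N^4*(N-1)*(N+1)^2) := by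
    field_simp
    ring
  have e4 : N * (-((-(1/N)) + (-(1/N))^2/2 + (-(1/N))^3/3 + (-(1/N))^4/4) - (1/N)^5/(1-1/N))
      + (N-1) * (-((1/N) + (1/N)^2/2 + (1/N)^3/3 + (1/N)^4/4) - (1/N)^5/(1-1/N))
      = 1/(2*N^2) + 1/(3*N^3) - (2*N-1)/(4*N^4) - (2*N-1)/(N^4*(N-1)) := by
    field_simp
    ring
  have hqd : 0 ≤ (10*N^4 - 29*N^3 - 37*N^2 - N + 9) / (12*N^4*(N-1)*(N+1)^2) := by positivity
  nlinarith [mul_le_mul_of_nonneg_left e1 (le_of_lt hNpos),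
    mul_le_mul_of_nonneg_left e2 (le_of_lt hd)]

lemma yl_core (n : ℕ) (hn : 2 ≤ n) :
    1 / (2 * ((n:ℝ)+1)^2) ≤
      Real.log (1 + 1/(n:ℝ)) + ((n:ℝ) - 1) * Real.log (1 - 1/(n:ℝ)^2) := by
  have hN2 : (2:ℝ) ≤ (n:ℝ) := by exact_mod_cast hn
  have hNpos : (0:ℝ) < (n:ℝ) := by linarith
  have hp1 : (0:ℝ) < 1 + 1/(n:ℝ) := by positivity
  have hp2 : (0:ℝ) < 1 - 1/(n:ℝ) := by
    have : 1/(n:ℝ) ≤ 1/2 := by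
      apply div_le_div_of_nonneg_left <;> linarith
    linarith
  have hsplit : (1:ℝ) - 1/(n:ℝ)^2 = (1+1/(n:ℝ))*(1-1/(n:ℝ)) := by field_simp; ring
  rw [hsplit, Real.log_mul (ne_of_gt hp1) (ne_of_gt hp2)]
  have goal_eq : Real.log (1+1/(n:ℝ)) + ((n:ℝ)-1) * (Real.log (1+1/(n:ℝ)) + Real.log (1-1/(n:ℝ)))
      = (n:ℝ) * Real.log (1+1/(n:ℝ)) + ((n:ℝ)-1) * Real.log (1-1/(n:ℝ)) := by ring
  rw [goal_eq]
  rcases eq_or_lt_of_le hn with h2 | h2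
  · -- n = 2
    have hn2 : n = 2 := h2.symm
    subst hn2
    push_cast
    have e : (2:ℝ) * Real.log (1+1/2) + Real.log (1-1/2) = Real.log (9/8) := by
      rw [show (9/8:ℝ) = (1+1/2)^(2:ℕ) * (1-1/2) by norm_num,
        Real.log_mul (by norm_num) (by norm_num), Real.log_pow]
      push_cast; ring
    have hb := log_ge_one_sub_inv (show (0:ℝ) < 9/8 by norm_num)
    norm_num at hb
    linarith [e, hb]
  rcases eq_or_lt_of_le (show 3 ≤ n from h2) with h3 | h3
  · have hn3 : n = 3 := h3.symm
    subst hn3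
    push_cast
    have e : (3:ℝ) * Real.log (1+1/3) + 2 * Real.log (1-1/3) = Real.log (256/243) := by
      rw [show (256/243:ℝ) = (1+1/3)^(3:ℕ) * (1-1/3)^(2:ℕ) by norm_num,
        Real.log_mul (by norm_num) (by norm_num), Real.log_pow, Real.log_pow]
      push_cast; ring
    have hb := log_ge_one_sub_inv (show (0:ℝ) < 256/243 by norm_num)
    norm_num at hb
    linarith [e, hb]
  · exact yl_core_real _ (by exact_mod_cast h3)

lemma yl_step {n : ℕ} (hn : 2 ≤ n) (H B Hn : Fin n → ℝ)
    (hHpos : ∀ j, 0 < H j) (hB : ∀ j, 0 ≤ B j)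
    (hrec : ∀ j, Hn j = (1 - 1/(n:ℝ)^2) * H j + (1/(n:ℝ)^2) * B j)
    (hcond : 1 + 1/(n:ℝ) < ∑ j', B j' * (1 / ((n:ℝ) * H j'))) :
    (∑ j, Real.log (H j)) + 1/(2*((n:ℝ)+1)^2) ≤ ∑ j, Real.log (Hn j) := by
  have hn2R : (2:ℝ) ≤ (n:ℝ) := by exact_mod_cast hn
  have hnpos : (0:ℝ) < (n:ℝ) := by linarith
  have hn0 : (n:ℝ) ≠ 0 := ne_of_gt hnpos
  have hc1 : (0:ℝ) < 1 - 1/(n:ℝ)^2 := by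
    have : 1/(n:ℝ)^2 ≤ 1/4 := by
      apply div_le_div_of_nonneg_left (by norm_num) (by norm_num)
      nlinarith
    linarith
  set S : ℝ := ∑ j', B j' / H j' with hS
  have hScond : (n:ℝ) + 1 < S := by
    have e : ∑ j', B j' * (1 / ((n:ℝ) * H j')) = S / n := by
      rw [hS, Finset.sum_div]
      apply Finset.sum_congr rfl
      intro j' _
      rw [mul_one_div, div_div, mul_comm ((n:ℝ)) (H j')]
    rw [e, lt_div_iff₀ hnpos] at hcond
    have : (1 + 1/(n:ℝ)) * n = n + 1 := by field_simp
    linarith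
  have hSpos : (0:ℝ) < S := by linarith
  have hS0 : S ≠ 0 := ne_of_gt hSpos
  set t : Fin n → ℝ := fun j => B j / H j / S with ht
  have ht0 : ∀ j, 0 ≤ t j := fun j =>
    div_nonneg (div_nonneg (hB j) (hHpos j).le) hSpos.le
  have htsum : ∑ j, t j = 1 := by
    rw [ht]
    simp only
    rw [← Finset.sum_div, ← hS, div_self hS0]
  have ht1 : ∀ j, t j ≤ 1 := by
    intro j
    rw [ht]
    simp only
    rw [div_le_one hSpos, hS]
    exact Finset.single_le_sum (f := fun j' => B j' / H j')
      (fun j' _ => div_nonneg (hB j') (hHpos j').le) (Finset.mem_univ j)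
  have hL1in : (0:ℝ) < 1 + (S-1)/(n:ℝ)^2 := by
    have : (0:ℝ) < (S-1)/(n:ℝ)^2 := by
      apply div_pos (by linarith) (by positivity)
    linarith
  set L0 : ℝ := Real.log (1 - 1/(n:ℝ)^2) with hL0
  set L1 : ℝ := Real.log (1 + (S-1)/(n:ℝ)^2) with hL1
  have hkey : ∀ j, Real.log (H j) + ((1 - t j) * L0 + t j * L1) ≤ Real.log (Hn j) := by
    intro j
    have hH0 : H j ≠ 0 := ne_of_gt (hHpos j)
    have hratio_eq : ((1 - t j) * (1 - 1/(n:ℝ)^2) + t j * (1 + (S-1)/(n:ℝ)^2)) * H j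
        = (1 - 1/(n:ℝ)^2) * H j + (1/(n:ℝ)^2) * B j := by
      rw [ht]
      simp only
      field_simp
      ring
    have hrpos : 0 < (1 - t j) * (1 - 1/(n:ℝ)^2) + t j * (1 + (S-1)/(n:ℝ)^2) := by
      nlinarith [mul_nonneg (sub_nonneg.2 (ht1 j)) hc1.le, mul_nonneg (ht0 j) hL1in.le,
        mul_pos hc1 hL1in, ht0 j, ht1 j]
    have e2 : Hn j = ((1 - t j) * (1 - 1/(n:ℝ)^2) + t j * (1 + (S-1)/(n:ℝ)^2)) * H j := by
      rw [hrec j, hratio_eq]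
    rw [e2, Real.log_mul (ne_of_gt hrpos) hH0]
    have conc := (strictConcaveOn_log_Ioi.concaveOn).2 (Set.mem_Ioi.2 hc1)
      (Set.mem_Ioi.2 hL1in) (sub_nonneg.2 (ht1 j)) (ht0 j) (by ring)
    rw [smul_eq_mul, smul_eq_mul, smul_eq_mul, smul_eq_mul] at conc
    linarith [conc]
  have hsum1 := Finset.sum_le_sum (fun j (_ : j ∈ Finset.univ) => hkey j)
  have hsum2 : ∑ j, (Real.log (H j) + ((1 - t j) * L0 + t j * L1))
      = (∑ j, Real.log (H j)) + (((n:ℝ) - 1) * L0 + L1) := by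
    rw [Finset.sum_add_distrib, Finset.sum_add_distrib, ← Finset.sum_mul, ← Finset.sum_mul]
    have e3 : ∑ j : Fin n, (1 - t j) = (n:ℝ) - 1 := by
      rw [Finset.sum_sub_distrib, htsum, Finset.sum_const, Finset.card_univ,
        Fintype.card_fin, nsmul_eq_mul, mul_one]
    rw [e3, htsum, one_mul]
  have hL1ge : Real.log (1 + 1/(n:ℝ)) ≤ L1 := by
    rw [hL1]
    apply Real.log_le_log (by positivity)
    have : 1/(n:ℝ) ≤ (S-1)/(n:ℝ)^2 := by
      rw [div_le_div_iff₀ hnpos (by positivity)]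
      nlinarith
    linarith
  have hcore := yl_core n hn
  rw [← hL0] at hcore
  rw [hsum2] at hsum1
  linarith

open scoped BigOperators

/-- Iteration bound for a stage of the Yamnitsky–Levin algorithm: if the
stopping condition fails for all `k ∈ {1, …, K}`, then
`K ≤ 2(n+1)²·n·log n`; in particular the stage finds an iterate satisfying the
stopping condition within `2(n+1)²·n·log n + 1` iterations. -/
theorem yl_stage_iteration_bound {m n : ℕ} (hn : 2 ≤ n)
    (A : Matrix (Fin m) (Fin n) ℝ)
    (hA : ∀ i j, 0 ≤ A i j)
    (hnorm : ∀ j, (∀ i, A i j ≤ 1) ∧ ∃ i, A i j = 1)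
    (lsel : Fin n → Fin m) (hlsel : ∀ j i, A i j ≤ A (lsel j) j)
    (lam : ℕ → Fin m → ℝ)
    (hlam1 : lam 1 = fun i => (1 / (n : ℝ)) * ∑ j : Fin n, if lsel j = i then 1 else 0)
    (jsel : ℕ → Fin m)
    (hjsel : ∀ k j, ∑ j', A j j' * (1 / ((n : ℝ) * A.transpose.mulVec (lam k) j'))
        ≤ ∑ j', A (jsel k) j' * (1 / ((n : ℝ) * A.transpose.mulVec (lam k) j')))
    (hrec : ∀ k, 1 ≤ k → lam (k + 1) = fun i =>
      (1 - 1 / (n : ℝ) ^ 2) * lam k i + (1 / (n : ℝ) ^ 2) * (if jsel k = i then 1 else 0)) :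
    (∀ K : ℕ, (∀ k, 1 ≤ k → k ≤ K →
        1 + 1 / (n : ℝ) < ∑ j', A (jsel k) j' *
          (1 / ((n : ℝ) * A.transpose.mulVec (lam k) j'))) →
      (K : ℝ) ≤ 2 * ((n : ℝ) + 1) ^ 2 * n * Real.log n) ∧
    (∃ k : ℕ, 1 ≤ k ∧ (k : ℝ) ≤ 2 * ((n : ℝ) + 1) ^ 2 * n * Real.log n + 1 ∧
      ∀ j, ∑ j', A j j' * (1 / ((n : ℝ) * A.transpose.mulVec (lam k) j'))
        ≤ 1 + 1 / (n : ℝ)) := by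
  classical
  have hn2R : (2:ℝ) ≤ (n:ℝ) := by exact_mod_cast hn
  have hnpos : (0:ℝ) < (n:ℝ) := by linarith
  have hn0 : (n:ℝ) ≠ 0 := ne_of_gt hnpos
  have hc1 : (0:ℝ) < 1 - 1/(n:ℝ)^2 := by
    have : 1/(n:ℝ)^2 ≤ 1/4 := by
      apply div_le_div_of_nonneg_left (by norm_num) (by norm_num)
      nlinarith
    linarith
  have hmv : ∀ k j, A.transpose.mulVec (lam k) j = ∑ i, A i j * lam k i := by
    intro k j
    simp [Matrix.mulVec, Matrix.transpose_apply, dotProduct]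
  simp only [hmv]
  simp only [hmv] at hjsel
  -- A at the selected row equals 1
  have hlsel1 : ∀ j, A (lsel j) j = 1 := by
    intro j
    obtain ⟨hle, i, hi⟩ := hnorm j
    exact le_antisymm (hle _) (hi ▸ hlsel j i)
  -- simplex invariants
  have hsimplex : ∀ k, 1 ≤ k → (∀ i, 0 ≤ lam k i) ∧ (∑ i, lam k i) = 1 := by
    intro k hk
    induction k, hk using Nat.le_induction with
    | base =>
      constructor
      · intro i
        rw [hlam1]
        apply mul_nonneg (by positivity)
        apply Finset.sum_nonneg
        intro j _
        split <;> norm_num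
      · rw [hlam1, ← Finset.mul_sum, Finset.sum_comm]
        simp
        field_simp
    | succ k hk ih =>
      constructor
      · intro i
        rw [hrec k hk]
        have h1 := ih.1 i
        have : (0:ℝ) ≤ if jsel k = i then 1 else 0 := by split <;> norm_num
        have h2 : (0:ℝ) < 1/(n:ℝ)^2 := by positivity
        nlinarith
      · rw [hrec k hk]
        simp only
        rw [Finset.sum_add_distrib, ← Finset.mul_sum, ← Finset.mul_sum, ih.2]
        simp
  -- recursion for the column sums
  have hrech : ∀ k, 1 ≤ k → ∀ j, (∑ i, A i j * lam (k+1) i)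
      = (1 - 1/(n:ℝ)^2) * (∑ i, A i j * lam k i) + (1/(n:ℝ)^2) * A (jsel k) j := by
    intro k hk j
    rw [hrec k hk]
    simp only
    have e : ∀ i, A i j * ((1 - 1/(n:ℝ)^2) * lam k i + (1/(n:ℝ)^2) * (if jsel k = i then 1 else 0))
        = (1 - 1/(n:ℝ)^2) * (A i j * lam k i)
          + (1/(n:ℝ)^2) * (if jsel k = i then A i j else 0) := by
      intro i
      split <;> ring
    rw [Finset.sum_congr rfl fun i _ => e i, Finset.sum_add_distrib,
      ← Finset.mul_sum, ← Finset.mul_sum]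
    simp
  -- lower bound for the initial column sums
  have h1lb : ∀ j, 1/(n:ℝ) ≤ ∑ i, A i j * lam 1 i := by
    intro j
    have h1eq : (∑ i, A i j * lam 1 i) = (1/(n:ℝ)) * ∑ j' : Fin n, A (lsel j') j := by
      rw [hlam1]
      simp only
      have e : ∀ i, A i j * ((1 / (n : ℝ)) * ∑ j' : Fin n, (if lsel j' = i then (1:ℝ) else 0))
          = (1/(n:ℝ)) * ∑ j' : Fin n, (if lsel j' = i then A i j else 0) := by
        intro i
        rw [Finset.mul_sum, Finset.mul_sum, Finset.mul_sum]
        apply Finset.sum_congr rfl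
        intro j' _
        split <;> ring
      rw [Finset.sum_congr rfl fun i _ => e i, ← Finset.mul_sum, Finset.sum_comm]
      congr 1
      apply Finset.sum_congr rfl
      intro j' _
      simp
    rw [h1eq]
    have hs : 1 ≤ ∑ j' : Fin n, A (lsel j') j := by
      have := Finset.single_le_sum (f := fun j' : Fin n => A (lsel j') j)
        (fun j' _ => hA _ _) (Finset.mem_univ j)
      simpa [hlsel1 j] using this
    have := mul_le_mul_of_nonneg_left hs (show (0:ℝ) ≤ 1/(n:ℝ) by positivity)
    linarith
  -- positivity of column sums
  have hpos : ∀ k, 1 ≤ k → ∀ j, 0 < ∑ i, A i j * lam k i := by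
    intro k hk
    induction k, hk using Nat.le_induction with
    | base =>
      intro j
      calc (0:ℝ) < 1/(n:ℝ) := by positivity
        _ ≤ _ := h1lb j
    | succ k hk ih =>
      intro j
      rw [hrech k hk j]
      have := ih j
      have hAn := hA (jsel k) j
      have h2 : (0:ℝ) ≤ 1/(n:ℝ)^2 := by positivity
      nlinarith
  -- upper bound of column sums
  have hub : ∀ k, 1 ≤ k → ∀ j, (∑ i, A i j * lam k i) ≤ 1 := by
    intro k hk j
    obtain ⟨hnn, hsum⟩ := hsimplex k hk
    calc (∑ i, A i j * lam k i) ≤ ∑ i, lam k i := by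
          apply Finset.sum_le_sum
          intro i _
          have := (hnorm j).1 i
          nlinarith [hnn i, hA i j]
      _ = 1 := hsum
  -- the per-step potential increase
  have hstep : ∀ k, 1 ≤ k →
      (1 + 1/(n:ℝ) < ∑ j', A (jsel k) j' * (1 / ((n:ℝ) * ∑ i, A i j' * lam k i))) →
      (∑ j, Real.log (∑ i, A i j * lam k i)) + 1/(2*((n:ℝ)+1)^2)
        ≤ ∑ j, Real.log (∑ i, A i j * lam (k+1) i) := by
    intro k hk hcond
    exact yl_step hn (fun j => ∑ i, A i j * lam k i) (fun j => A (jsel k) j)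
      (fun j => ∑ i, A i j * lam (k+1) i) (hpos k hk) (fun j => hA _ _)
      (fun j => hrech k hk j) hcond
  -- telescoping
  have htel : ∀ K : ℕ, (∀ k, 1 ≤ k → k ≤ K →
      1 + 1/(n:ℝ) < ∑ j', A (jsel k) j' * (1 / ((n:ℝ) * ∑ i, A i j' * lam k i))) →
      (∑ j, Real.log (∑ i, A i j * lam 1 i)) + K * (1/(2*((n:ℝ)+1)^2))
        ≤ ∑ j, Real.log (∑ i, A i j * lam (K+1) i) := by
    intro K
    induction K with
    | zero => intro _; simp
    | succ K ih =>
      intro hc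
      have h1 := ih (fun k hk hkK => hc k hk (le_trans hkK (Nat.le_succ K)))
      have h2 := hstep (K+1) (Nat.succ_le_succ (Nat.zero_le K)) (hc (K+1) (Nat.succ_le_succ (Nat.zero_le K)) (le_refl _))
      push_cast
      push_cast at h1
      linarith
  -- initial potential lower bound
  have hinit : -((n:ℝ) * Real.log n) ≤ ∑ j, Real.log (∑ i, A i j * lam 1 i) := by
    have : ∀ j : Fin n, -Real.log n ≤ Real.log (∑ i, A i j * lam 1 i) := by
      intro j
      rw [← Real.log_inv, ← one_div]
      exact Real.log_le_log (by positivity) (h1lb j)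
    calc -((n:ℝ) * Real.log n) = ∑ _j : Fin n, -Real.log n := by
          rw [Finset.sum_const, Finset.card_univ, Fintype.card_fin, nsmul_eq_mul]; ring
      _ ≤ _ := Finset.sum_le_sum fun j _ => this j
  -- final potential upper bound
  have hfinal : ∀ k, 1 ≤ k → (∑ j, Real.log (∑ i, A i j * lam k i)) ≤ 0 := by
    intro k hk
    apply Finset.sum_nonpos
    intro j _
    exact Real.log_nonpos (le_of_lt (hpos k hk j)) (hub k hk j)
  -- part 1
  have part1 : ∀ K : ℕ, (∀ k, 1 ≤ k → k ≤ K →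
      1 + 1/(n:ℝ) < ∑ j', A (jsel k) j' * (1 / ((n:ℝ) * ∑ i, A i j' * lam k i))) →
      (K : ℝ) ≤ 2 * ((n : ℝ) + 1) ^ 2 * n * Real.log n := by
    intro K hc
    have h1 := htel K hc
    have h2 := hfinal (K+1) (Nat.succ_le_succ (Nat.zero_le K))
    have h3 : (K:ℝ) * (1/(2*((n:ℝ)+1)^2)) ≤ (n:ℝ) * Real.log n := by linarith
    have h4 : (0:ℝ) < 2*((n:ℝ)+1)^2 := by positivity
    calc (K:ℝ) = ((K:ℝ) * (1/(2*((n:ℝ)+1)^2))) * (2*((n:ℝ)+1)^2) := by field_simp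
      _ ≤ ((n:ℝ) * Real.log n) * (2*((n:ℝ)+1)^2) := by
          apply mul_le_mul_of_nonneg_right h3 (le_of_lt h4)
      _ = 2 * ((n : ℝ) + 1) ^ 2 * n * Real.log n := by ring
  refine ⟨part1, ?_⟩
  -- part 2
  set C := 2 * ((n : ℝ) + 1) ^ 2 * n * Real.log n with hC
  have hC0 : 0 ≤ C := by
    have : 0 ≤ Real.log n := Real.log_nonneg (by linarith)
    positivity
  have hex : ¬ (∀ k, 1 ≤ k → k ≤ ⌊C⌋₊ + 1 →
      1 + 1/(n:ℝ) < ∑ j', A (jsel k) j' * (1 / ((n:ℝ) * ∑ i, A i j' * lam k i))) := by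
    intro hall
    have h1 := part1 _ hall
    have h2 : C < ((⌊C⌋₊ + 1 : ℕ) : ℝ) := by
      push_cast
      exact Nat.lt_floor_add_one C
    linarith
  push_neg at hex
  obtain ⟨k, hk1, hk2, hk3⟩ := hex
  refine ⟨k, hk1, ?_, ?_⟩
  · have : ((k:ℕ):ℝ) ≤ ((⌊C⌋₊ + 1 : ℕ):ℝ) := by exact_mod_cast hk2
    have h5 : ((⌊C⌋₊ :ℕ):ℝ) ≤ C := Nat.floor_le hC0
    push_cast at this
    linarith
  · intro j
    exact le_trans (hjsel k j) hk3
end
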